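/- arXiv:1005.5542 — 3 statements merged into one kernel-verified Lean document; each statement's English description precedes it below -/
import Mathlib

section
/- Let X be a zero-dimensional Polish space which is not locally compact. If the derived set X' is not compact, then C_k(X,2) is not σ-compact, and hence (having countable cs*-character and being separable non-metrizable) not sequential. -/
open Set Filter Topology

section Helpers

/-- Agreement-on-a-compact-set sets are open in the compact-open topology. -/
lemma agree_isOpen {X : Type*} [TopologicalSpace X] {C : Set X} (hC : IsCompact C)
    (g : C(X, Bool)) : IsOpen {f : C(X, Bool) | ∀ z ∈ C, f z = g z} := by
  have heq : {f : C(X, Bool) | ∀ z ∈ C, f z = g z} =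
      {f : C(X, Bool) | Set.MapsTo f (C ∩ (⇑g) ⁻¹' {true}) {true}} ∩
      {f : C(X, Bool) | Set.MapsTo f (C ∩ (⇑g) ⁻¹' {false}) {false}} := by
    ext f
    simp only [Set.mem_setOf_eq, Set.mem_inter_iff, Set.MapsTo, Set.mem_inter_iff,
      Set.mem_preimage, Set.mem_singleton_iff]
    constructor
    · intro h
      exact ⟨fun z hz => (h z hz.1).trans hz.2, fun z hz => (h z hz.1).trans hz.2⟩
    · intro h z hz
      cases hgz : g z with
      | false => exact h.2 ⟨hz, hgz⟩
      | true => exact h.1 ⟨hz, hgz⟩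
  rw [heq]
  have hcl : ∀ b : Bool, IsCompact (C ∩ (⇑g) ⁻¹' {b}) := fun b =>
    hC.inter_right ((isClosed_discrete _).preimage g.continuous)
  exact (ContinuousMap.isOpen_setOf_mapsTo (hcl true) (isOpen_discrete _)).inter
    (ContinuousMap.isOpen_setOf_mapsTo (hcl false) (isOpen_discrete _))

/-- A compact set of continuous maps has only finitely many "patterns" on a compact set. -/
lemma finite_agree_cover {X : Type*} [TopologicalSpace X] {K : Set C(X, Bool)} (hK : IsCompact K)
    {C : Set X} (hC : IsCompact C) :
    ∃ t : Finset C(X, Bool), ∀ f ∈ K, ∃ g ∈ t, ∀ z ∈ C, f z = g z := by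
  obtain ⟨t, -, ht⟩ := hK.elim_nhds_subcover (fun g => {f : C(X, Bool) | ∀ z ∈ C, f z = g z})
    (fun g _ => (agree_isOpen hC g).mem_nhds (fun z _ => rfl))
  refine ⟨t, fun f hf => ?_⟩
  simpa using ht hf

/-- From a non-totally-bounded set, extract a uniformly separated sequence. -/
lemma exists_sep_seq {X : Type*} [MetricSpace X] {s : Set X} (hs : ¬ TotallyBounded s) :
    ∃ δ > (0:ℝ), ∃ u : ℕ → X, (∀ n, u n ∈ s) ∧ ∀ m n, m ≠ n → δ ≤ dist (u m) (u n) := by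
  rw [Metric.totallyBounded_iff] at hs
  push_neg at hs
  obtain ⟨ε, hε, hcov⟩ := hs
  have hpt : ∀ t : Finset X, ∃ x, x ∈ s ∧ ∀ y ∈ t, ε ≤ dist x y := by
    intro t
    obtain ⟨x, hxs, hx⟩ := Set.not_subset.1 (hcov (↑t) t.finite_toSet)
    refine ⟨x, hxs, fun y hy => ?_⟩
    by_contra hlt
    exact hx (Set.mem_biUnion hy (by simpa [Metric.mem_ball] using lt_of_not_ge hlt))
  classical
  choose F hFs hFd using hpt
  set v : ℕ → Finset X := fun n => Nat.rec ∅ (fun _ t => insert (F t) t) n with hv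
  have hvs : ∀ n, v (n + 1) = insert (F (v n)) (v n) := fun n => rfl
  have hmono : ∀ m n, m ≤ n → v m ⊆ v n := by
    intro m n h
    induction n with
    | zero => simpa [Nat.le_zero.1 h]
    | succ k ih =>
      rcases Nat.lt_or_ge m (k+1) with h' | h'
      · exact (ih (Nat.lt_succ_iff.1 h')).trans (by rw [hvs]; exact Finset.subset_insert _ _)
      · have : m = k + 1 := le_antisymm h h'
        simp [this]
  set u : ℕ → X := fun n => F (v n) with hu
  have hmem : ∀ m n, m < n → u m ∈ v n := by
    intro m n h
    have : u m ∈ v (m + 1) := by rw [hvs]; exact Finset.mem_insert_self _ _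
    exact hmono (m+1) n h this
  refine ⟨ε, hε, u, fun n => hFs (v n), fun m n hmn => ?_⟩
  rcases Nat.lt_or_ge m n with h | h
  · rw [dist_comm]; exact hFd (v n) (u m) (hmem m n h)
  · exact hFd (v m) (u n) (hmem n m (lt_of_le_of_ne h (Ne.symm hmn)))

lemma not_totallyBounded_of_closed_noncompact {X : Type*} [MetricSpace X] [CompleteSpace X]
    {s : Set X} (h1 : IsClosed s) (h2 : ¬ IsCompact s) : ¬ TotallyBounded s :=
  fun htb => h2 (isCompact_iff_totallyBounded_isComplete.2 ⟨htb, h1.isComplete⟩)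

/-- Approach sequence to a non-isolated point, with geometric decay of distances. -/
lemma exists_approach {X : Type*} [MetricSpace X] {q : X} (hq : ¬ IsOpen ({q} : Set X))
    {r : ℝ} (hr : 0 < r) :
    ∃ t : ℕ → X, (∀ j, t j ≠ q) ∧ (∀ j, dist (t j) q < r) ∧
      (∀ i j, i < j → dist (t j) q ≤ dist (t i) q / 4) ∧
      Filter.Tendsto t Filter.atTop (𝓝 q) := by
  have near : ∀ ρ : ℝ, 0 < ρ → ∃ y, y ≠ q ∧ dist y q < ρ := by
    intro ρ hρ
    by_contra h
    push_neg at h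
    apply hq
    have hball : Metric.ball q ρ = {q} := by
      apply Set.eq_singleton_iff_unique_mem.2
      refine ⟨Metric.mem_ball_self hρ, fun y hy => ?_⟩
      by_contra hne
      exact absurd (by simpa [Metric.mem_ball] using hy) (not_lt.2 (h y hne))
    rw [← hball]
    exact Metric.isOpen_ball
  have near' : ∀ x : {y : X // y ≠ q}, ∃ z, z ≠ q ∧ dist z q < min (r/2) (dist (x : X) q / 4) := by
    intro x
    exact near _ (lt_min (by linarith) (div_pos (dist_pos.2 x.2) (by norm_num)))
  choose G hG1 hG2 using near'
  obtain ⟨y0, hy0, hy0d⟩ := near (r/2) (by linarith)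
  set T : ℕ → {y : X // y ≠ q} := fun n => Nat.rec ⟨y0, hy0⟩ (fun _ x => ⟨G x, hG1 x⟩) n with hT
  have hTs : ∀ n, (T (n+1) : X) = G (T n) := fun n => rfl
  set t : ℕ → X := fun n => (T n : X) with ht
  have hne : ∀ j, t j ≠ q := fun j => (T j).2
  have hstep : ∀ j, dist (t (j+1)) q < min (r/2) (dist (t j) q / 4) := by
    intro j
    exact hG2 (T j)
  have hpos : ∀ j, 0 < dist (t j) q := fun j => dist_pos.2 (hne j)
  have hlt : ∀ j, dist (t j) q < r := by
    intro j
    cases j with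
    | zero => calc dist (t 0) q = dist y0 q := rfl
                _ < r/2 := hy0d
                _ < r := by linarith
    | succ k =>
      have := hstep k
      have h2 := lt_of_lt_of_le this (min_le_left _ _)
      linarith
  have hdecay : ∀ i j, i < j → dist (t j) q ≤ dist (t i) q / 4 := by
    intro i j hij
    induction j with
    | zero => omega
    | succ k ih =>
      rcases Nat.lt_or_ge i k with h' | h'
      · have h1 := ih h'
        have h2 := lt_of_lt_of_le (hstep k) (min_le_right _ _)
        have h3 := hpos i
        linarith
      · have : i = k := by omega
        subst this
        exact le_of_lt (lt_of_lt_of_le (hstep i) (min_le_right _ _))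
  have hgeo : ∀ j, dist (t j) q ≤ (r/2) * (1/4 : ℝ)^j := by
    intro j
    induction j with
    | zero => show dist y0 q ≤ _; simpa using le_of_lt hy0d
    | succ k ih =>
      have h2 := lt_of_lt_of_le (hstep k) (min_le_right _ _)
      have : ((1:ℝ)/4)^(k+1) = (1/4)^k / 4 := by ring
      rw [this]
      calc dist (t (k+1)) q ≤ dist (t k) q / 4 := le_of_lt h2
        _ ≤ ((r/2) * (1/4)^k) / 4 := by linarith
        _ = (r/2) * ((1/4)^k / 4) := by ring
  refine ⟨t, hne, hlt, hdecay, ?_⟩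
  rw [tendsto_iff_dist_tendsto_zero]
  apply squeeze_zero (fun j => dist_nonneg) hgeo
  have := tendsto_pow_atTop_nhds_zero_of_lt_one (by norm_num : (0:ℝ) ≤ 1/4) (by norm_num)
  simpa using this.const_mul (r/2)

lemma exists_infinite_fiber' {β : Type*} (g : ℕ → β) {T : Set β} (hT : T.Finite)
    (hg : ∀ n, g n ∈ T) : ∃ b ∈ T, {n | g n = b}.Infinite := by
  by_contra h
  push_neg at h
  exact Set.infinite_univ (Set.Finite.subset
    (hT.biUnion (fun b hb => h b hb))
    (fun n _ => Set.mem_biUnion (hg n) rfl))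

/-- Every open neighborhood in the compact-open topology contains an
agreement-on-a-compact-set neighborhood. -/
lemma exists_compact_forcing {X : Type*} [TopologicalSpace X] {O : Set C(X, Bool)}
    (hO : IsOpen O) {g0 : C(X, Bool)} (hg0 : g0 ∈ O) :
    ∃ C : Set X, IsCompact C ∧ ∀ f : C(X, Bool), (∀ z ∈ C, f z = g0 z) → f ∈ O := by
  have hO' : TopologicalSpace.GenerateOpen
      (Set.image2 (fun K U => {f : C(X, Bool) | Set.MapsTo f K U})
        {K : Set X | IsCompact K} {U : Set Bool | IsOpen U}) O := hO
  clear hO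
  induction hO' with
  | basic m hm =>
    obtain ⟨K, hK, U, hU, rfl⟩ := hm
    exact ⟨K, hK, fun f hf z hz => by rw [hf z hz]; exact hg0 hz⟩
  | univ => exact ⟨∅, isCompact_empty, fun f _ => trivial⟩
  | inter O1 O2 h1 h2 ih1 ih2 =>
    obtain ⟨C1, hC1, hf1⟩ := ih1 hg0.1
    obtain ⟨C2, hC2, hf2⟩ := ih2 hg0.2
    exact ⟨C1 ∪ C2, hC1.union hC2,
      fun f hf => ⟨hf1 f (fun z hz => hf z (Or.inl hz)), hf2 f (fun z hz => hf z (Or.inr hz))⟩⟩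
  | sUnion S hS ih =>
    obtain ⟨s, hsS, hgs⟩ := hg0
    obtain ⟨C, hC, hf⟩ := ih s hsS hgs
    exact ⟨C, hC, fun f hf' => ⟨s, hsS, hf f hf'⟩⟩

/-- The set of non-isolated points is closed. -/
lemma isClosed_nonisolated {X : Type*} [TopologicalSpace X] :
    IsClosed {x : X | ¬ IsOpen ({x} : Set X)} := by
  rw [← isOpen_compl_iff]
  have : {x : X | ¬ IsOpen ({x} : Set X)}ᶜ = {x : X | IsOpen ({x} : Set X)} := by
    ext x; simp
  rw [this]
  rw [isOpen_iff_mem_nhds]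
  intro x hx
  refine Filter.mem_of_superset (hx.mem_nhds rfl) ?_
  intro y hy
  rcases hy with rfl
  exact hx

end Helpers

section Part1

lemma not_sigmaCompact {X : Type*} [MetricSpace X] [CompleteSpace X]
    (hzd : ∀ (x : X) (U : Set X), IsOpen U → x ∈ U →
      ∃ V : Set X, IsClopen V ∧ x ∈ V ∧ V ⊆ U)
    (hX' : ¬ IsCompact {x : X | ¬ IsOpen ({x} : Set X)}) :
    ¬ SigmaCompactSpace C(X, Bool) := by
  intro hsc
  haveI := hsc
  -- separated sequence of non-isolated points
  obtain ⟨δ, hδ, q, hqD, hsep⟩ := exists_sep_seq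
    (not_totallyBounded_of_closed_noncompact isClosed_nonisolated hX')
  set K : ℕ → Set C(X, Bool) := compactCovering C(X, Bool) with hK
  -- for each n, find a nearby point where all members of K n agree with the value at q n
  have hmain : ∀ n : ℕ, ∃ z : X, z ≠ q n ∧ dist z (q n) < δ/12 ∧
      ∀ f ∈ K n, f z = f (q n) := by
    intro n
    obtain ⟨t, htne, htlt, -, httend⟩ := exists_approach (hqD n) (by linarith : (0:ℝ) < δ/12)
    have hCn : IsCompact (insert (q n) (Set.range t)) := httend.isCompact_insert_range
    obtain ⟨tfin, htfin⟩ := finite_agree_cover (isCompact_compactCovering _ n) hCn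
    have hev : ∀ᶠ j in atTop, ∀ g ∈ tfin, (g : C(X, Bool)) (t j) = g (q n) := by
      rw [Filter.eventually_all_finset]
      intro g _
      have h1 : Filter.Tendsto (fun j => g (t j)) atTop (𝓝 (g (q n))) :=
        (g.continuous.tendsto (q n)).comp httend
      have h2 := h1 ((isOpen_discrete {g (q n)}).mem_nhds rfl)
      simpa using h2
    obtain ⟨j, hj⟩ := hev.exists
    refine ⟨t j, htne j, htlt j, fun f hf => ?_⟩
    obtain ⟨g, hgt, hg⟩ := htfin f hf
    have h1 := hg (t j) (Set.mem_insert_of_mem _ ⟨j, rfl⟩)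
    have h2 := hg (q n) (Set.mem_insert _ _)
    rw [h1, h2, hj g hgt]
  choose z hzne hzlt hzag using hmain
  -- clopen neighborhoods
  have hVn : ∀ n : ℕ, ∃ V : Set X, IsClopen V ∧ z n ∈ V ∧
      V ⊆ Metric.ball (q n) (δ/4) \ {q n} := by
    intro n
    apply hzd (z n) _ (Metric.isOpen_ball.sdiff isClosed_singleton)
    exact ⟨Metric.mem_ball.2 (by linarith [hzlt n]), by simpa using hzne n⟩
  choose V hVcl hzV hVsub using hVn
  set W : Set X := ⋃ n, V n with hW
  have hWopen : IsOpen W := isOpen_iUnion (fun n => (hVcl n).isOpen)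
  have hqnotW : ∀ n, q n ∉ W := by
    intro n hn
    obtain ⟨m, hm⟩ := Set.mem_iUnion.1 hn
    have := hVsub m hm
    rcases eq_or_ne m n with rfl | hmn
    · exact this.2 rfl
    · have h1 := hsep m n hmn
      have h2 : dist (q n) (q m) < δ/4 := Metric.mem_ball.1 this.1
      rw [dist_comm] at h2
      linarith
  have hWclosed : IsClosed W := by
    apply isClosed_of_closure_subset
    intro x hx
    by_cases hcase : ∃ n0, dist x (q n0) < δ/2
    · obtain ⟨n0, hn0⟩ := hcase
      have hxV : x ∈ closure (V n0) := by
        rw [mem_closure_iff]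
        intro O hO hxO
        obtain ⟨w, ⟨hwO, hwb⟩, hwW⟩ := mem_closure_iff.1 hx (O ∩ Metric.ball x (δ/4))
          (hO.inter Metric.isOpen_ball) ⟨hxO, Metric.mem_ball_self (by linarith)⟩
        obtain ⟨m, hm⟩ := Set.mem_iUnion.1 hwW
        rcases eq_or_ne m n0 with rfl | hmn
        · exact ⟨w, hwO, hm⟩
        · exfalso
          have h1 := hsep n0 m hmn.symm
          have h2 : dist w (q m) < δ/4 := Metric.mem_ball.1 (hVsub m hm).1
          have h3 : dist w x < δ/4 := Metric.mem_ball.1 hwb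
          have h4 := dist_triangle (q n0) x (q m)
          have h5 := dist_triangle x w (q m)
          rw [dist_comm x (q n0)] at hn0
          rw [dist_comm w x] at h3
          linarith
      rw [(hVcl n0).isClosed.closure_eq] at hxV
      exact Set.mem_iUnion.2 ⟨n0, hxV⟩
    · exfalso
      push_neg at hcase
      obtain ⟨w, hwb, hwW⟩ := mem_closure_iff.1 hx (Metric.ball x (δ/4))
        Metric.isOpen_ball (Metric.mem_ball_self (by linarith))
      obtain ⟨m, hm⟩ := Set.mem_iUnion.1 hwW
      have h2 : dist w (q m) < δ/4 := Metric.mem_ball.1 (hVsub m hm).1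
      have h3 : dist w x < δ/4 := Metric.mem_ball.1 hwb
      have h4 := hcase m
      have h5 := dist_triangle x w (q m)
      rw [dist_comm w x] at h3
      linarith
  -- the indicator function of W
  set f : C(X, Bool) := ⟨W.boolIndicator,
    (continuous_boolIndicator_iff_isClopen W).2 ⟨hWclosed, hWopen⟩⟩ with hf
  have hfW : ∃ n, f ∈ K n := by
    have : f ∈ ⋃ n, K n := by rw [hK, iUnion_compactCovering]; trivial
    exact Set.mem_iUnion.1 this
  obtain ⟨n, hn⟩ := hfW
  have h1 : f (z n) = f (q n) := hzag n f hn
  have h2 : f (z n) = true := (W.mem_iff_boolIndicator _).1 (Set.mem_iUnion.2 ⟨n, hzV n⟩)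
  have h3 : f (q n) = false := (W.notMem_iff_boolIndicator _).1 (hqnotW n)
  rw [h2, h3] at h1
  exact Bool.true_eq_false ▸ h1

end Part1

section Part2

lemma not_sequential {X : Type*} [MetricSpace X] [CompleteSpace X]
    (hzd : ∀ (x : X) (U : Set X), IsOpen U → x ∈ U →
      ∃ V : Set X, IsClopen V ∧ x ∈ V ∧ V ⊆ U)
    (hnlc : ¬ WeaklyLocallyCompactSpace X)
    (hX' : ¬ IsCompact {x : X | ¬ IsOpen ({x} : Set X)}) :
    ¬ SequentialSpace C(X, Bool) := by
  intro hseq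
  haveI := hseq
  classical
  -- a point with no compact neighborhood
  have hpex : ∃ p : X, ∀ Kc : Set X, IsCompact Kc → Kc ∉ 𝓝 p := by
    by_contra h
    push_neg at h
    exact hnlc ⟨h⟩
  obtain ⟨p, hpK⟩ := hpex
  -- separated sequence of non-isolated points, away from p
  obtain ⟨δ, hδ, q0, hq0D, hsep0⟩ := exists_sep_seq
    (not_totallyBounded_of_closed_noncompact isClosed_nonisolated hX')
  have hqex : ∃ q : ℕ → X, (∀ n, ¬ IsOpen ({q n} : Set X)) ∧
      (∀ m n, m ≠ n → δ ≤ dist (q m) (q n)) ∧ (∀ n, δ/2 ≤ dist p (q n)) := by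
    by_cases hb : ∃ n0, dist p (q0 n0) < δ/2
    · obtain ⟨n0, hn0⟩ := hb
      refine ⟨fun n => q0 (if n < n0 then n else n+1), fun n => hq0D _,
        fun m n hmn => hsep0 _ _ (by split <;> split <;> omega), fun n => ?_⟩
      have hne : (if n < n0 then n else n+1) ≠ n0 := by split <;> omega
      have h1 := hsep0 _ _ hne
      have h2 := dist_triangle (q0 (if n < n0 then n else n+1)) p (q0 n0)
      rw [dist_comm]
      linarith
    · push_neg at hb
      exact ⟨q0, hq0D, hsep0, hb⟩
  obtain ⟨q, hqD, hsep, hqp⟩ := hqex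
  -- shrinking clopen neighborhoods of p
  have hUex : ∀ n : ℕ, ∃ U : Set X, IsClopen U ∧ p ∈ U ∧
      U ⊆ Metric.ball p (min (1/(n+1)) (δ/4)) := fun n =>
    hzd p _ Metric.isOpen_ball (Metric.mem_ball_self (lt_min (by positivity) (by linarith)))
  choose U hUcl hpU hUsub using hUex
  have hUnotTB : ∀ n, ¬ TotallyBounded (U n \ {p}) := by
    intro n htb
    have hUtb : TotallyBounded (U n) := by
      refine TotallyBounded.subset (fun x hx => ?_) (htb.union (totallyBounded_singleton p))
      by_cases hxp : x = p
      · exact Or.inr (by simp [hxp])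
      · exact Or.inl ⟨hx, hxp⟩
    have hcomp : IsCompact (U n) :=
      isCompact_iff_totallyBounded_isComplete.2 ⟨hUtb, (hUcl n).isClosed.isComplete⟩
    exact hpK _ hcomp ((hUcl n).isOpen.mem_nhds (hpU n))
  have hVex : ∀ n : ℕ, ∃ d : ℝ, 0 < d ∧ ∃ v : ℕ → X, (∀ j, v j ∈ U n \ {p}) ∧
      (∀ i j, i ≠ j → d ≤ dist (v i) (v j)) := by
    intro n
    obtain ⟨d, hd, u, h1, h2⟩ := exists_sep_seq (hUnotTB n)
    exact ⟨d, hd, u, h1, h2⟩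
  choose dv hdv v hvmem hvsep using hVex
  have hvp : ∀ n j, v n j ≠ p := fun n j => (hvmem n j).2
  -- clopen supports around the v's
  have hBex : ∀ n j, ∃ B : Set X, IsClopen B ∧ v n j ∈ B ∧
      B ⊆ U n ∩ Metric.ball (v n j) (min (dv n / 4) (dist (v n j) p / 2)) := by
    intro n j
    apply hzd _ _ ((hUcl n).isOpen.inter Metric.isOpen_ball)
    refine ⟨(hvmem n j).1, Metric.mem_ball_self ?_⟩
    exact lt_min (by linarith [hdv n]) (div_pos (dist_pos.2 (hvp n j)) (by norm_num))
  choose B hBcl hvB hBsub using hBex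
  -- tag sequences approaching the q's
  have hTex : ∀ n : ℕ, ∃ t : ℕ → X, (∀ j, t j ≠ q n) ∧ (∀ j, dist (t j) (q n) < δ/12) ∧
      (∀ i j, i < j → dist (t j) (q n) ≤ dist (t i) (q n) / 4) ∧
      Filter.Tendsto t Filter.atTop (𝓝 (q n)) :=
    fun n => exists_approach (hqD n) (by linarith)
  choose t htne htlt htdecay httend using hTex
  have hTagex : ∀ n j, ∃ T : Set X, IsClopen T ∧ t n j ∈ T ∧
      T ⊆ Metric.ball (t n j) (dist (t n j) (q n) / 4) := fun n j =>
    hzd _ _ Metric.isOpen_ball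
      (Metric.mem_ball_self (div_pos (dist_pos.2 (htne n j)) (by norm_num)))
  choose Tg hTgcl htTg hTgsub using hTagex
  -- supports of the test functions
  set S : ℕ → ℕ → Set X := fun n j => Tg n j ∪ B n j with hS
  have hScl : ∀ n j, IsClopen (S n j) := fun n j => (hTgcl n j).union (hBcl n j)
  -- geometry
  have hTgq : ∀ n j, ∀ x ∈ Tg n j, dist x (q n) < δ/6 := by
    intro n j x hx
    have h1 : dist x (t n j) < dist (t n j) (q n) / 4 := Metric.mem_ball.1 (hTgsub n j hx)
    have h2 := htlt n j
    have h3 := dist_triangle x (t n j) (q n)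
    linarith
  have hBp : ∀ n j, ∀ x ∈ B n j, dist x p < min (1/((n:ℝ)+1)) (δ/4) := fun n j x hx =>
    Metric.mem_ball.1 (hUsub n ((hBsub n j hx).1))
  have hpS : ∀ n j, p ∉ S n j := by
    rintro n j (hT | hB)
    · have h1 := hTgq n j p hT
      have h2 := hqp n
      linarith
    · have h1 : dist p (v n j) < dist (v n j) p / 2 :=
        lt_of_lt_of_le (Metric.mem_ball.1 (hBsub n j hB).2) (min_le_right _ _)
      rw [dist_comm] at h1
      have := dist_nonneg (x := v n j) (y := p)
      linarith
  have hqS : ∀ m n j, q m ∉ S n j := by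
    rintro m n j (hT | hB)
    · rcases eq_or_ne m n with rfl | hmn
      · have h1 : dist (q m) (t m j) < dist (t m j) (q m) / 4 :=
          Metric.mem_ball.1 (hTgsub m j hT)
        rw [dist_comm] at h1
        have h2 := dist_pos.2 (htne m j)
        linarith
      · have h1 := hTgq n j (q m) hT
        have h2 := hsep m n hmn
        linarith
    · have h1 : dist (q m) p < δ/4 := lt_of_lt_of_le (hBp n j _ hB) (min_le_right _ _)
      have h2 := hqp m
      rw [dist_comm] at h1
      linarith
  have htS_self : ∀ n j, t n j ∈ S n j := fun n j => Or.inl (htTg n j)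
  have htS_ne : ∀ n j j', j' ≠ j → t n j' ∉ S n j := by
    rintro n j j' hne (hT | hB)
    · have h1 : dist (t n j') (t n j) < dist (t n j) (q n) / 4 :=
        Metric.mem_ball.1 (hTgsub n j hT)
      have h3 := dist_triangle (t n j) (t n j') (q n)
      have h4 := dist_triangle (t n j') (t n j) (q n)
      have hpos := dist_pos.2 (htne n j)
      have hpos' := dist_pos.2 (htne n j')
      rcases lt_or_gt_of_ne hne with h | h
      · -- j' < j : dist (t n j) (q n) ≤ dist (t n j') (q n) / 4
        have hd := htdecay n j' j h
        linarith
      · -- j < j' : dist (t n j') (q n) ≤ dist (t n j) (q n) / 4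
        have hd := htdecay n j j' h
        rw [dist_comm (t n j) (t n j')] at h3
        linarith
    · have h1 : dist (t n j') p < δ/4 := lt_of_lt_of_le (hBp n j _ hB) (min_le_right _ _)
      have h2 := hqp n
      have h3 := htlt n j'
      have h4 := dist_triangle p (t n j') (q n)
      rw [dist_comm] at h1
      linarith
  -- the test functions
  set fS : ℕ → ℕ → C(X, Bool) := fun n j => ⟨(S n j).boolIndicator,
    (continuous_boolIndicator_iff_isClopen _).2 ⟨(hScl n j).isClosed, (hScl n j).isOpen⟩⟩ with hfS
  have hfS_true : ∀ n j x, x ∈ S n j → fS n j x = true := fun n j x hx =>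
    ((S n j).mem_iff_boolIndicator x).1 hx
  have hfS_false : ∀ n j x, x ∉ S n j → fS n j x = false := fun n j x hx =>
    ((S n j).notMem_iff_boolIndicator x).1 hx
  set F : Set C(X, Bool) := {g | ∃ n j, g = fS n j} with hF
  set z0 : C(X, Bool) := ContinuousMap.const X false with hz0
  -- z0 is not in F
  have hz0F : z0 ∉ F := by
    rintro ⟨n, j, hg⟩
    have h1 : z0 (t n j) = false := rfl
    rw [hg, hfS_true n j _ (htS_self n j)] at h1
    exact Bool.noConfusion h1
  -- z0 is in the closure of F
  have hz0cl : z0 ∈ closure F := by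
    rw [mem_closure_iff]
    intro O hO h0O
    obtain ⟨C, hC, hforce⟩ := exists_compact_forcing hO h0O
    -- a level n whose q is far from C
    have hn : ∃ n, ∀ y ∈ C, δ/3 ≤ dist (q n) y := by
      by_contra h
      push_neg at h
      choose y hyC hyd using h
      obtain ⟨tC, htCfin, hCsub⟩ := Metric.totallyBounded_iff.1 hC.totallyBounded (δ/12)
        (by linarith)
      haveI := htCfin.to_subtype
      have hcen : ∀ i : ℕ, ∃ c, ∃ _ : c ∈ tC, y i ∈ Metric.ball c (δ/12) := by
        intro i
        have := hCsub (hyC i)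
        simpa using this
      choose c hcmem hcball using hcen
      obtain ⟨i, i', hii, hcc⟩ := Finite.exists_ne_map_eq_of_infinite
        (fun i : ℕ => (⟨c i, hcmem i⟩ : tC))
      have hceq : c i = c i' := congrArg Subtype.val hcc
      have h1 : dist (y i) (c i) < δ/12 := Metric.mem_ball.1 (hcball i)
      have h2 : dist (y i') (c i) < δ/12 := hceq ▸ Metric.mem_ball.1 (hcball i')
      have h3 := hsep i i' hii
      have h4 := dist_triangle (q i) (y i) (q i')
      have h5 := dist_triangle (y i) (y i') (q i')
      have h6 := dist_triangle (y i) (c i) (y i')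
      have h7 := hyd i
      have h8 := hyd i'
      rw [dist_comm (y i') (q i')] at h5
      rw [dist_comm (c i) (y i')] at h6
      linarith
    obtain ⟨n, hfar⟩ := hn
    -- a j whose support avoids C
    have hj : ∃ j, ∀ y ∈ C, y ∉ B n j := by
      by_contra h
      push_neg at h
      choose y hyC hyB using h
      obtain ⟨tC, htCfin, hCsub⟩ := Metric.totallyBounded_iff.1 hC.totallyBounded (dv n / 4)
        (by linarith [hdv n])
      haveI := htCfin.to_subtype
      have hcen : ∀ i : ℕ, ∃ c, ∃ _ : c ∈ tC, y i ∈ Metric.ball c (dv n / 4) := by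
        intro i
        have := hCsub (hyC i)
        simpa using this
      choose c hcmem hcball using hcen
      obtain ⟨i, i', hii, hcc⟩ := Finite.exists_ne_map_eq_of_infinite
        (fun i : ℕ => (⟨c i, hcmem i⟩ : tC))
      have hceq : c i = c i' := congrArg Subtype.val hcc
      have h1 : dist (y i) (c i) < dv n / 4 := Metric.mem_ball.1 (hcball i)
      have h2 : dist (y i') (c i) < dv n / 4 := hceq ▸ Metric.mem_ball.1 (hcball i')
      have h3 := hvsep n i i' hii
      have hb1 : dist (y i) (v n i) < dv n / 4 :=
        lt_of_lt_of_le (Metric.mem_ball.1 (hBsub n i (hyB i)).2) (min_le_left _ _)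
      have hb2 : dist (y i') (v n i') < dv n / 4 :=
        lt_of_lt_of_le (Metric.mem_ball.1 (hBsub n i' (hyB i')).2) (min_le_left _ _)
      have h4 := dist_triangle (v n i) (y i) (y i')
      have h5 := dist_triangle (y i') (v n i') (q n)
      have h6 := dist_triangle (y i) (c i) (y i')
      have h7 := dist_triangle (v n i) (y i') (v n i')
      rw [dist_comm (y i) (v n i)] at hb1
      rw [dist_comm (c i) (y i')] at h6
      linarith
    obtain ⟨j, hjC⟩ := hj
    refine ⟨fS n j, hforce _ (fun z hz => ?_), ⟨n, j, rfl⟩⟩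
    have hzS : z ∉ S n j := by
      rintro (hT | hB)
      · have h1 := hfar z hz
        rw [dist_comm] at h1
        exact absurd (hTgq n j z hT) (not_lt.2 (by linarith))
      · exact hjC z hz hB
    rw [hfS_false n j z hzS]
    rfl
  -- every compact set meets F in a finite set
  have hKfin : ∀ Kc : Set C(X, Bool), IsCompact Kc → (F ∩ Kc).Finite := by
    intro Kc hKc
    have hA : ∀ n, {j | fS n j ∈ Kc}.Finite := by
      intro n
      rw [← Set.not_infinite]
      intro hinf
      obtain ⟨tfin, htfin⟩ := finite_agree_cover hKc ((httend n).isCompact_insert_range)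
      set e := hinf.natEmbedding with he
      have hsel : ∀ i : ℕ, ∃ g, ∃ _ : g ∈ tfin,
          ∀ z ∈ insert (q n) (Set.range (t n)), fS n (e i : ℕ) z = g z := by
        intro i
        obtain ⟨g, hgt, hg⟩ := htfin _ (e i).2
        exact ⟨g, hgt, hg⟩
      choose g hgt hgag using hsel
      obtain ⟨i, i', hii, hgg⟩ := Finite.exists_ne_map_eq_of_infinite
        (fun i : ℕ => (⟨g i, hgt i⟩ : tfin))
      have hgeq : g i = g i' := congrArg Subtype.val hgg
      have hjne : (e i : ℕ) ≠ (e i' : ℕ) := fun h => hii (e.injective (Subtype.ext h))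
      have hmem : t n (e i : ℕ) ∈ insert (q n) (Set.range (t n)) :=
        Set.mem_insert_of_mem _ ⟨_, rfl⟩
      have h1 := hgag i _ hmem
      have h2 := hgag i' _ hmem
      rw [← hgeq] at h2
      rw [hfS_true n (e i : ℕ) (t n (e i : ℕ)) (htS_self n (e i : ℕ))] at h1
      rw [hfS_false n (e i' : ℕ) (t n (e i : ℕ)) (htS_ne n (e i' : ℕ) (e i : ℕ) hjne)] at h2
      rw [← h2] at h1
      exact Bool.noConfusion h1
    have hB' : {n | ∃ j, fS n j ∈ Kc}.Finite := by
      rw [← Set.not_infinite]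
      intro hinf
      set e := hinf.natEmbedding with he
      have hjsel : ∀ i : ℕ, ∃ j, fS (e i : ℕ) j ∈ Kc := (fun i => (e i).2)
      choose jf hjf using hjsel
      set w : ℕ → X := fun i => v (e i : ℕ) (jf i) with hw
      have hwp : Filter.Tendsto w Filter.atTop (𝓝 p) := by
        rw [tendsto_iff_dist_tendsto_zero]
        apply squeeze_zero (fun i => dist_nonneg) (g := fun i => 1/(((e i : ℕ) : ℝ)+1))
        · intro i
          exact le_of_lt (lt_of_lt_of_le (hBp _ _ _ (hvB _ _)) (min_le_left _ _))
        · have hinj : Function.Injective (fun i : ℕ => (e i : ℕ)) :=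
            fun a b h => e.injective (Subtype.ext h)
          have hei : Filter.Tendsto (fun i : ℕ => (e i : ℕ)) atTop atTop := by
            rw [← Nat.cofinite_eq_atTop]
            exact hinj.tendsto_cofinite
          exact tendsto_one_div_add_atTop_nhds_zero_nat.comp hei
      obtain ⟨tfin, htfin⟩ := finite_agree_cover hKc hwp.isCompact_insert_range
      have hsel : ∀ i : ℕ, ∃ g, ∃ _ : g ∈ tfin,
          ∀ z ∈ insert p (Set.range w), fS (e i : ℕ) (jf i) z = g z := by
        intro i
        obtain ⟨g, hgt, hg⟩ := htfin _ (hjf i)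
        exact ⟨g, hgt, hg⟩
      choose g hgt hgag using hsel
      obtain ⟨g0, hg0, hfib⟩ := exists_infinite_fiber' g tfin.finite_toSet (fun i => hgt i)
      obtain ⟨i0, hi0⟩ := hfib.nonempty
      have hfreq : ∃ᶠ i in atTop, w i ∈ S (e i0 : ℕ) (jf i0) := by
        rw [Nat.frequently_atTop_iff_infinite]
        refine hfib.mono (fun i hi => ?_)
        have hwi : w i ∈ insert p (Set.range w) := Set.mem_insert_of_mem _ ⟨i, rfl⟩
        have h1 := hgag i _ hwi
        have h2 := hgag i0 _ hwi
        rw [hi] at h1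
        rw [hi0] at h2
        have h3 : fS (e i0 : ℕ) (jf i0) (w i) = true := by
          rw [h2, ← h1]
          exact hfS_true _ _ _ (Or.inr (hvB _ _))
        exact ((S _ _).mem_iff_boolIndicator _).2 h3
      have hple := mem_closure_of_frequently_of_tendsto hfreq hwp
      rw [(hScl _ _).isClosed.closure_eq] at hple
      exact hpS _ _ hple
    have hsub : F ∩ Kc ⊆ ⋃ n ∈ {n | ∃ j, fS n j ∈ Kc}, (fun j => fS n j) '' {j | fS n j ∈ Kc} := by
      rintro g ⟨⟨n, j, rfl⟩, hgK⟩
      exact Set.mem_biUnion ⟨j, hgK⟩ ⟨j, hgK, rfl⟩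
    exact Set.Finite.subset (hB'.biUnion (fun n _ => (hA n).image _)) hsub
  -- F is sequentially closed
  have hFseq : IsSeqClosed F := by
    intro g h hgF hgh
    have hKc : IsCompact (insert h (Set.range g)) := hgh.isCompact_insert_range
    have hfin : (Set.range g).Finite := by
      refine Set.Finite.subset (hKfin _ hKc) ?_
      rintro x ⟨n, rfl⟩
      exact ⟨hgF n, Set.mem_insert_of_mem _ ⟨n, rfl⟩⟩
    obtain ⟨a, ha, hafib⟩ := exists_infinite_fiber' g hfin (fun n => Set.mem_range_self n)
    have hfreq : ∃ᶠ n in atTop, g n ∈ ({a} : Set C(X, Bool)) := by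
      rw [Nat.frequently_atTop_iff_infinite]
      simpa using hafib
    have hcl := mem_closure_of_frequently_of_tendsto hfreq hgh
    rw [isClosed_singleton.closure_eq] at hcl
    obtain ⟨n0, rfl⟩ := ha
    rw [hcl]
    exact hgF n0
  -- contradiction
  have hFclosed : IsClosed F := hFseq.isClosed
  rw [hFclosed.closure_eq] at hz0cl
  exact hz0F hz0cl

end Part2


theorem stmt15 {X : Type*} [TopologicalSpace X] [PolishSpace X]
    (hzd : ∀ (x : X) (U : Set X), IsOpen U → x ∈ U →
      ∃ V : Set X, IsClopen V ∧ x ∈ V ∧ V ⊆ U)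
    (hnlc : ¬ WeaklyLocallyCompactSpace X)
    (hX' : ¬ IsCompact {x : X | ¬ IsOpen ({x} : Set X)}) :
    ¬ SigmaCompactSpace C(X, Bool) ∧ ¬ SequentialSpace C(X, Bool) := by
  letI := TopologicalSpace.upgradeIsCompletelyMetrizable X
  exact ⟨not_sigmaCompact hzd hX', not_sequential hzd hnlc hX'⟩
end

section
/- If X' is a closed non-compact subset of a Polish space X consisting of non-isolated points, then there is a countably infinite closed discrete set T ⊆ X' and a discrete family {U_t : t ∈ T} of pairwise disjoint clopen subsets of X with t ∈ U_t for each t ∈ T, provided X is zero-dimensional; consequently C_k(X,2) contains a closed copy of the product Π_{t∈T} C_k(U_t,2). -/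
open Set Topology Metric

section Glue

variable {X : Type*} [TopologicalSpace X]

open Classical in
noncomputable def glueFn (V : ℕ → Set X) (f : ∀ n, C(V n, Bool)) (x : X) : Bool :=
  if h : ∃ n, ∃ hx : x ∈ V n, f n ⟨x, hx⟩ = true then true else false

lemma glueFn_eq_of_mem {V : ℕ → Set X} (hdisj : ∀ m n, m ≠ n → Disjoint (V m) (V n))
    (f : ∀ n, C(V n, Bool)) {x : X} {n : ℕ} (hx : x ∈ V n) :
    glueFn V f x = f n ⟨x, hx⟩ := by
  unfold glueFn
  by_cases h : f n ⟨x, hx⟩ = true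
  · rw [dif_pos ⟨n, hx, h⟩, h]
  · rw [dif_neg]
    · simp only [Bool.not_eq_true] at h
      exact h.symm
    · rintro ⟨m, hm, hfm⟩
      rcases eq_or_ne m n with rfl | hmn
      · exact h hfm
      · exact Set.disjoint_left.1 (hdisj m n hmn) hm hx

lemma glueFn_eq_false {V : ℕ → Set X} (f : ∀ n, C(V n, Bool)) {x : X}
    (h : ∀ n, x ∉ V n) : glueFn V f x = false := by
  unfold glueFn
  rw [dif_neg]
  rintro ⟨m, hm, -⟩
  exact h m hm

lemma isLocallyConstant_glueFn {V : ℕ → Set X} (hclopen : ∀ n, IsClopen (V n))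
    (hdisj : ∀ m n, m ≠ n → Disjoint (V m) (V n))
    (hdis : ∀ x : X, ∃ W ∈ nhds x, {n : ℕ | (V n ∩ W).Nonempty}.Subsingleton)
    (f : ∀ n, C(V n, Bool)) : IsLocallyConstant (glueFn V f) := by
  rw [IsLocallyConstant.iff_exists_open]
  intro x
  obtain ⟨W, hW, hsub⟩ := hdis x
  obtain ⟨N, hNW, hNopen, hxN⟩ := mem_nhds_iff.1 hW
  by_cases hx : ∃ n, x ∈ V n
  · obtain ⟨n, hn⟩ := hx
    refine ⟨N ∩ (Subtype.val '' ((f n) ⁻¹' {f n ⟨x, hn⟩})),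
      hNopen.inter ((hclopen n).2.isOpenMap_subtype_val _
        ((f n).continuous.isOpen_preimage _ (isOpen_discrete _))),
      ⟨hxN, ⟨⟨x, hn⟩, rfl, rfl⟩⟩, ?_⟩
    rintro y ⟨hyN, ⟨y', hy', rfl⟩⟩
    simp only [mem_preimage, mem_singleton_iff] at hy'
    rw [glueFn_eq_of_mem hdisj f y'.2, glueFn_eq_of_mem hdisj f hn]
    simpa using hy'
  · push_neg at hx
    have hgx : glueFn V f x = false := glueFn_eq_false f hx
    by_cases hk : ∃ k, (V k ∩ N).Nonempty
    · obtain ⟨k, hk⟩ := hk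
      refine ⟨N \ V k, hNopen.sdiff (hclopen k).1, ⟨hxN, hx k⟩, ?_⟩
      rintro y ⟨hyN, hyk⟩
      rw [hgx]
      apply glueFn_eq_false
      intro m hm
      have hmk : m = k := hsub ⟨y, hm, hNW hyN⟩ ⟨hk.choose, hk.choose_spec.1, hNW hk.choose_spec.2⟩
      exact hyk (hmk ▸ hm)
    · refine ⟨N, hNopen, hxN, ?_⟩
      intro y hyN
      rw [hgx]
      apply glueFn_eq_false
      intro m hm
      exact hk ⟨m, ⟨y, hm, hyN⟩⟩

lemma exists_closedEmbedding_glue {V : ℕ → Set X} (hclopen : ∀ n, IsClopen (V n))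
    (hdisj : ∀ m n, m ≠ n → Disjoint (V m) (V n))
    (hdis : ∀ x : X, ∃ W ∈ nhds x, {n : ℕ | (V n ∩ W).Nonempty}.Subsingleton) :
    ∃ e : (∀ n : ℕ, C(V n, Bool)) → C(X, Bool), Topology.IsClosedEmbedding e := by
  set e : (∀ n : ℕ, C(V n, Bool)) → C(X, Bool) :=
    fun f => ⟨glueFn V f, (isLocallyConstant_glueFn hclopen hdisj hdis f).continuous⟩ with he
  refine ⟨e, ?_⟩
  have heval : ∀ (f : ∀ n : ℕ, C(V n, Bool)) (x : X) (n : ℕ) (hx : x ∈ V n),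
      e f x = f n ⟨x, hx⟩ := fun f x n hx => glueFn_eq_of_mem hdisj f hx
  have hevalf : ∀ (f : ∀ n : ℕ, C(V n, Bool)) (x : X), (∀ n, x ∉ V n) → e f x = false :=
    fun f x hx => glueFn_eq_false f hx
  have hcpt : ∀ n : ℕ, ∀ K : Set X, IsCompact K →
      IsCompact ((Subtype.val : V n → X) ⁻¹' K) := by
    intro n K hK
    rw [Topology.IsEmbedding.subtypeVal.isCompact_iff, Subtype.image_preimage_coe]
    exact hK.inter_left (hclopen n).1
  have hfinK : ∀ K : Set X, IsCompact K → {n : ℕ | (V n ∩ K).Nonempty}.Finite := by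
    intro K hK
    have hdis' := hdis
    choose W hW hsub using hdis'
    obtain ⟨t, -, ht⟩ := hK.elim_nhds_subcover W (fun x _ => hW x)
    refine (t.finite_toSet.biUnion (fun x _ => (hsub x).finite)).subset ?_
    rintro n ⟨y, hyV, hyK⟩
    obtain ⟨x, hxt, hyx⟩ := mem_iUnion₂.1 (ht hyK)
    exact mem_biUnion hxt ⟨y, hyV, hyx⟩
  have hcont : Continuous e := by
    rw [ContinuousMap.continuous_compactOpen]
    intro K hK U hU
    have hfin : {n : ℕ | (V n ∩ K).Nonempty}.Finite := hfinK K hK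
    by_cases htU : true ∈ U <;> by_cases hfU : false ∈ U
    · have huniv : {f | MapsTo (e f) K U} = univ := by
        refine eq_univ_of_forall fun f x _ => ?_
        rcases Bool.dichotomy (e f x) with h | h <;> rw [h] <;> assumption
      rw [huniv]; exact isOpen_univ
    · -- true ∈ U, false ∉ U
      by_cases hKV : K ⊆ ⋃ n, V n
      · have heq : {f | MapsTo (e f) K U} = ⋂ n ∈ {n : ℕ | (V n ∩ K).Nonempty},
            (fun f : ∀ n : ℕ, C(V n, Bool) => f n) ⁻¹'
              {h : C(V n, Bool) | MapsTo h (Subtype.val ⁻¹' K) {true}} := by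
          ext f
          simp only [mem_setOf_eq, mem_iInter, mem_preimage]
          constructor
          · intro hf n _ y hy
            have h1 := hf hy
            rw [heval f y.val n y.2] at h1
            simp only [mem_singleton_iff]
            by_contra hc
            simp only [Bool.not_eq_true] at hc
            rw [hc] at h1
            exact hfU h1
          · intro hf x hx
            obtain ⟨n, hn⟩ := mem_iUnion.1 (hKV hx)
            have h1 := hf n ⟨x, hn, hx⟩ (show (⟨x, hn⟩ : V n) ∈ Subtype.val ⁻¹' K from hx)
            simp only [mem_singleton_iff] at h1
            rw [heval f x n hn, h1]
            exact htU
        rw [heq]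
        exact hfin.isOpen_biInter fun n _ =>
          (ContinuousMap.isOpen_setOf_mapsTo (hcpt n K hK) (isOpen_discrete _)).preimage
            (continuous_apply n)
      · have hempty : {f | MapsTo (e f) K U} = ∅ := by
          refine eq_empty_iff_forall_notMem.2 fun f hf => ?_
          obtain ⟨x, hxK, hxV⟩ := not_subset.1 hKV
          have h1 := hf hxK
          rw [hevalf f x (fun n hn => hxV (mem_iUnion.2 ⟨n, hn⟩))] at h1
          exact hfU h1
        rw [hempty]; exact isOpen_empty
    · -- false ∈ U, true ∉ U
      have heq : {f | MapsTo (e f) K U} = ⋂ n ∈ {n : ℕ | (V n ∩ K).Nonempty},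
          (fun f : ∀ n : ℕ, C(V n, Bool) => f n) ⁻¹'
            {h : C(V n, Bool) | MapsTo h (Subtype.val ⁻¹' K) {false}} := by
        ext f
        simp only [mem_setOf_eq, mem_iInter, mem_preimage]
        constructor
        · intro hf n _ y hy
          have h1 := hf hy
          rw [heval f y.val n y.2] at h1
          simp only [mem_singleton_iff]
          by_contra hc
          simp only [Bool.not_eq_false] at hc
          rw [hc] at h1
          exact htU h1
        · intro hf x hx
          by_cases hxV : ∃ n, x ∈ V n
          · obtain ⟨n, hn⟩ := hxV
            have h1 := hf n ⟨x, hn, hx⟩ (show (⟨x, hn⟩ : V n) ∈ Subtype.val ⁻¹' K from hx)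
            simp only [mem_singleton_iff] at h1
            rw [heval f x n hn, h1]
            exact hfU
          · push_neg at hxV
            rw [hevalf f x hxV]
            exact hfU
      rw [heq]
      exact hfin.isOpen_biInter fun n _ =>
        (ContinuousMap.isOpen_setOf_mapsTo (hcpt n K hK) (isOpen_discrete _)).preimage
          (continuous_apply n)
    · -- U contains neither value
      rcases K.eq_empty_or_nonempty with rfl | ⟨x, hx⟩
      · have huniv : {f | MapsTo (e f) ∅ U} = univ :=
          eq_univ_of_forall fun f => mapsTo_empty _ _
        rw [huniv]; exact isOpen_univ
      · have hempty : {f | MapsTo (e f) K U} = ∅ := by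
          refine eq_empty_iff_forall_notMem.2 fun f hf => ?_
          have h1 := hf hx
          rcases Bool.dichotomy (e f x) with h | h <;> rw [h] at h1
          · exact hfU h1
          · exact htU h1
        rw [hempty]; exact isOpen_empty
  have hli : Function.LeftInverse
      (fun (g : C(X, Bool)) (n : ℕ) => g.restrict (V n)) e := by
    intro f
    funext n
    ext y
    simpa using heval f y.val n y.2
  exact hli.isClosedEmbedding
    (continuous_pi fun n => ContinuousMap.continuous_restrict _) hcont

end Glue

theorem stmt17 {X : Type*} [TopologicalSpace X] [PolishSpace X]
    (hzd : ∀ (x : X) (U : Set X), IsOpen U → x ∈ U →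
      ∃ V : Set X, IsClopen V ∧ x ∈ V ∧ V ⊆ U)
    (hX' : ¬ IsCompact {x : X | ¬ IsOpen ({x} : Set X)}) :
    ∃ (T : ℕ → X) (U : ℕ → Set X),
      Function.Injective T ∧
      (∀ n, ¬ IsOpen ({T n} : Set X)) ∧
      IsClosed (Set.range T) ∧
      DiscreteTopology ↥(Set.range T) ∧
      (∀ n, IsClopen (U n)) ∧
      (Set.univ : Set ℕ).PairwiseDisjoint U ∧
      (∀ n, T n ∈ U n) ∧
      (∀ x : X, ∃ V ∈ nhds x, {n : ℕ | (U n ∩ V).Nonempty}.Subsingleton) ∧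
      ∃ e : (∀ n : ℕ, C(U n, Bool)) → C(X, Bool), Topology.IsClosedEmbedding e := by
  classical
  letI := TopologicalSpace.upgradeIsCompletelyMetrizable X
  set X' : Set X := {x : X | ¬ IsOpen ({x} : Set X)} with hX'def
  have hclosed : IsClosed X' := by
    rw [← isOpen_compl_iff, isOpen_iff_mem_nhds]
    intro x hx
    simp only [hX'def, mem_compl_iff, mem_setOf_eq, not_not] at hx
    filter_upwards [hx.mem_nhds rfl] with y hy
    simp only [mem_singleton_iff] at hy
    subst hy
    simp only [hX'def, mem_compl_iff, mem_setOf_eq, not_not]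
    exact hx
  have hnotTB : ¬ TotallyBounded X' := fun h =>
    hX' (isCompact_iff_totallyBounded_isComplete.2 ⟨h, hclosed.isComplete⟩)
  rw [Metric.totallyBounded_iff] at hnotTB
  push_neg at hnotTB
  obtain ⟨ε, hε, hcov⟩ := hnotTB
  have key : ∀ L : List X, ∃ z, z ∈ X' ∧ ∀ y ∈ L, ε ≤ dist y z := by
    intro L
    obtain ⟨z, hz, hz2⟩ := not_subset.1 (hcov {y | y ∈ L} L.finite_toSet)
    refine ⟨z, hz, fun y hy => ?_⟩
    by_contra h
    push_neg at h
    exact hz2 (mem_iUnion₂.2 ⟨y, hy, mem_ball.2 (by rwa [dist_comm])⟩)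
  choose F hF1 hF2 using key
  set G : ℕ → List X := fun n => Nat.rec [] (fun _ L => L ++ [F L]) n with hG
  set T : ℕ → X := fun n => F (G n) with hT
  have hGsucc : ∀ n, G (n + 1) = G n ++ [T n] := fun n => rfl
  have hmemG : ∀ n m, m < n → T m ∈ G n := by
    intro n
    induction n with
    | zero => intro m hm; omega
    | succ n ih =>
      intro m hm
      rw [hGsucc, List.mem_append]
      rcases Nat.lt_succ_iff_lt_or_eq.1 hm with h | rfl
      · exact Or.inl (ih m h)
      · exact Or.inr (List.mem_singleton.2 rfl)
  have hsep : ∀ m n, m < n → ε ≤ dist (T m) (T n) := fun m n h =>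
    hF2 (G n) (T m) (hmemG n m h)
  have hsep' : ∀ m n, m ≠ n → ε ≤ dist (T m) (T n) := by
    intro m n h
    rcases h.lt_or_gt with h | h
    · exact hsep m n h
    · rw [dist_comm]; exact hsep n m h
  have hTX' : ∀ n, T n ∈ X' := fun n => hF1 (G n)
  have hinj : Function.Injective T := by
    intro m n h
    by_contra hne
    have h1 := hsep' m n hne
    rw [h, dist_self] at h1
    linarith
  have hcl : IsClosed (Set.range T) := by
    rw [← isOpen_compl_iff, isOpen_iff_mem_nhds]
    intro x hx
    by_cases h : ∃ n, T n ∈ ball x (ε / 2)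
    · obtain ⟨n, hn⟩ := h
      have hxn : 0 < dist x (T n) := by
        rw [dist_pos]
        exact fun he => hx (he ▸ mem_range_self n)
      filter_upwards [ball_mem_nhds x (lt_min (half_pos hε) hxn)] with y hy
      rintro ⟨m, rfl⟩
      rw [mem_ball] at hy hn
      have h1 : dist (T m) x < ε / 2 := lt_of_lt_of_le hy (min_le_left _ _)
      have hmn : m = n := by
        by_contra hmn
        have h2 := hsep' m n hmn
        have h3 : dist (T m) (T n) ≤ dist (T m) x + dist x (T n) := dist_triangle _ _ _
        rw [dist_comm x (T n)] at h3
        linarith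
      subst hmn
      have h4 : dist (T m) x < dist x (T m) := lt_of_lt_of_le hy (min_le_right _ _)
      rw [dist_comm] at h4
      exact lt_irrefl _ h4
    · push_neg at h
      filter_upwards [ball_mem_nhds x (half_pos hε)] with y hy
      rintro ⟨m, rfl⟩
      exact h m hy
  have hdt : DiscreteTopology ↥(Set.range T) := by
    rw [discreteTopology_iff_isOpen_singleton]
    rintro ⟨x, hx⟩
    rw [isOpen_induced_iff]
    refine ⟨ball x (ε / 2), isOpen_ball, ?_⟩
    ext ⟨y, hy⟩
    simp only [mem_preimage, mem_singleton_iff, Subtype.mk.injEq, mem_ball]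
    obtain ⟨n, rfl⟩ := hx
    obtain ⟨m, rfl⟩ := hy
    constructor
    · intro h
      by_contra hne
      have hmn : m ≠ n := fun e => hne (by rw [e])
      have := hsep' m n hmn
      linarith
    · intro h
      rw [h, dist_self]
      exact half_pos hε
  choose V hVclopen hTV hVsub using fun n =>
    hzd (T n) (ball (T n) (ε / 4)) isOpen_ball (mem_ball_self (by positivity))
  have hdisj : ∀ m n, m ≠ n → Disjoint (V m) (V n) := by
    intro m n hmn
    rw [Set.disjoint_left]
    intro z hzm hzn
    have h1 := mem_ball.1 (hVsub m hzm)
    have h2 := mem_ball.1 (hVsub n hzn)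
    have h3 := hsep' m n hmn
    have h4 : dist (T m) (T n) ≤ dist z (T m) + dist z (T n) := dist_triangle_left _ _ _
    linarith
  have hdis : ∀ x : X, ∃ W ∈ nhds x, {n : ℕ | (V n ∩ W).Nonempty}.Subsingleton := by
    intro x
    refine ⟨ball x (ε / 8), ball_mem_nhds x (by positivity), ?_⟩
    rintro m ⟨y, hym, hyx⟩ n ⟨z, hzn, hzx⟩
    by_contra hmn
    have h1 := mem_ball.1 (hVsub m hym)
    have h2 := mem_ball.1 (hVsub n hzn)
    rw [mem_ball] at hyx hzx
    have h3 := hsep' m n hmn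
    have h5 : dist (T m) (T n) ≤ dist (T m) y + dist y x + (dist x z + dist z (T n)) := by
      calc dist (T m) (T n) ≤ dist (T m) x + dist x (T n) := dist_triangle _ _ _
        _ ≤ dist (T m) y + dist y x + (dist x z + dist z (T n)) :=
          add_le_add (dist_triangle _ _ _) (dist_triangle _ _ _)
    rw [dist_comm (T m) y, dist_comm x z] at h5
    linarith
  refine ⟨T, V, hinj, hTX', hcl, hdt, hVclopen, ?_, hTV, hdis,
    exists_closedEmbedding_glue hVclopen hdisj hdis⟩
  intro m _ n _ hmn
  exact hdisj m n hmn
end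

section
/- The space C_k(ω × M, 2), where ω × M is the topological sum of countably many copies of the countable metric fan M, is homeomorphic to the countable power C_k(M,2)^ω with the product topology, and is not sequential. -/
open Filter Topology

/-- The countable metric fan `M = (ω × ω) ∪ {∞}`; `none` plays the role of `∞`. -/
def Fan : Type := Option (ℕ × ℕ)

/-- The basic neighborhood `U(n) = {∞} ∪ ((ω \ n) × ω)` of `∞`. -/
def fanU (n : ℕ) : Set Fan := {x | x = none ∨ ∃ p : ℕ × ℕ, x = some p ∧ n ≤ p.1}

/-- The fan topology: points of `ω × ω` are isolated and the sets `U(n)` are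
basic neighborhoods of `∞`. -/
instance : TopologicalSpace Fan :=
  TopologicalSpace.generateFrom
    ({V | ∃ p : ℕ × ℕ, V = {some p}} ∪ {V | ∃ n : ℕ, V = fanU n})

instance : DecidableEq Fan := show DecidableEq (Option (ℕ × ℕ)) by infer_instance

/-- The point `(k, m)` of the fan. -/
def fanPt (p : ℕ × ℕ) : Fan := some p

/-- The point `∞` of the fan. -/
def fanInf : Fan := none

lemma fanPt_inj {p q : ℕ × ℕ} (h : fanPt p = fanPt q) : p = q := Option.some.inj h

lemma fanPt_ne_inf (p : ℕ × ℕ) : fanPt p ≠ fanInf := fun h => Option.some_ne_none p h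

lemma fanInf_ne_pt (p : ℕ × ℕ) : fanInf ≠ fanPt p := fun h => Option.some_ne_none p h.symm

lemma isOpen_some (p : ℕ × ℕ) : IsOpen ({fanPt p} : Set Fan) :=
  TopologicalSpace.isOpen_generateFrom_of_mem (Or.inl ⟨p, rfl⟩)

lemma isOpen_fanU (n : ℕ) : IsOpen (fanU n) :=
  TopologicalSpace.isOpen_generateFrom_of_mem (Or.inr ⟨n, rfl⟩)

lemma mem_fanU_pt {n : ℕ} {p : ℕ × ℕ} : fanPt p ∈ fanU n ↔ n ≤ p.1 := by
  constructor
  · rintro (h | ⟨q, hq, hle⟩)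
    · exact absurd h (fanPt_ne_inf p)
    · cases fanPt_inj hq; exact hle
  · intro h; exact Or.inr ⟨p, rfl, h⟩

lemma inf_mem_fanU (n : ℕ) : fanInf ∈ fanU n := Or.inl rfl

lemma fanU_anti {m n : ℕ} (h : m ≤ n) : fanU n ⊆ fanU m := by
  rintro x (hx | ⟨p, hp, hle⟩)
  · exact Or.inl hx
  · exact Or.inr ⟨p, hp, le_trans h hle⟩

lemma isOpen_ne_some (p : ℕ × ℕ) : IsOpen {x : Fan | x ≠ fanPt p} := by
  rw [isOpen_iff_forall_mem_open]
  intro x hx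
  match x with
  | none =>
      refine ⟨fanU (p.1 + 1), ?_, isOpen_fanU _, inf_mem_fanU _⟩
      rintro y (hy | ⟨q, hq, hle⟩)
      · subst hy; exact fanInf_ne_pt p
      · subst hq
        intro hcon
        cases fanPt_inj (hcon : fanPt q = fanPt p)
        omega
  | some q =>
      refine ⟨{fanPt q}, ?_, isOpen_some q, rfl⟩
      rintro y hy
      cases hy
      exact hx

/-- Every open set containing `∞` contains some `fanU n`. -/
lemma exists_fanU_subset {U : Set Fan} (hU : IsOpen U) (hm : fanInf ∈ U) :
    ∃ n, fanU n ⊆ U := by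
  have hU' : TopologicalSpace.GenerateOpen
      ({V | ∃ p : ℕ × ℕ, V = {some p}} ∪ {V | ∃ n : ℕ, V = fanU n}) U := hU
  clear hU
  induction hU' with
  | basic V hV =>
      rcases hV with ⟨p, rfl⟩ | ⟨n, rfl⟩
      · exact absurd hm (fanInf_ne_pt p)
      · exact ⟨n, subset_rfl⟩
  | univ => exact ⟨0, fun _ _ => trivial⟩
  | inter U V hU hV ihU ihV =>
      obtain ⟨n₁, h₁⟩ := ihU hm.1
      obtain ⟨n₂, h₂⟩ := ihV hm.2
      exact ⟨max n₁ n₂, fun x hx =>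
        ⟨h₁ (fanU_anti (le_max_left _ _) hx), h₂ (fanU_anti (le_max_right _ _) hx)⟩⟩
  | sUnion S hS ih =>
      obtain ⟨t, htS, hmt⟩ := hm
      obtain ⟨n, hn⟩ := ih t htS hmt
      exact ⟨n, fun x hx => ⟨t, htS, hn hx⟩⟩

/-- Points whose first coordinate tends to infinity converge to `∞` in the fan. -/
lemma tendsto_fanPt_fanInf (q : ℕ → ℕ × ℕ) (h : Tendsto (fun j => (q j).1) atTop atTop) :
    Tendsto (fun j => fanPt (q j)) atTop (𝓝 fanInf) := by
  rw [Filter.tendsto_def]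
  intro s hs
  rw [mem_nhds_iff] at hs
  obtain ⟨t, hts, hto, hmem⟩ := hs
  obtain ⟨n, hn⟩ := exists_fanU_subset hto hmem
  filter_upwards [h.eventually_ge_atTop n] with j hj
  exact hts (hn (mem_fanU_pt.2 hj))

/-- Each column trace of a compact subset of the fan is finite. -/
lemma col_finite {K : Set Fan} (hK : IsCompact K) (k : ℕ) :
    {m : ℕ | fanPt (k, m) ∈ K}.Finite := by
  set cov : Option (ℕ × ℕ) → Set Fan := fun o =>
    match o with
    | none => fanU (k + 1)
    | some p => {fanPt p} with hcov
  have hcover : K ⊆ ⋃ o : Option (ℕ × ℕ), cov o := by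
    intro x _
    match x with
    | none => exact Set.mem_iUnion.2 ⟨none, inf_mem_fanU _⟩
    | some p => exact Set.mem_iUnion.2 ⟨some p, rfl⟩
  obtain ⟨t, ht⟩ := hK.elim_finite_subcover cov
    (fun o : Option (ℕ × ℕ) => by
      match o with
      | none => exact isOpen_fanU (k + 1)
      | some p => exact isOpen_some p) hcover
  apply (t.finite_toSet.image (fun o : Option (ℕ × ℕ) => (o.getD (0, 0)).2)).subset
  intro m hm
  have hmem := ht hm
  rw [Set.mem_iUnion₂] at hmem
  obtain ⟨o, hot, ho⟩ := hmem
  match o with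
  | none =>
      exfalso
      have := mem_fanU_pt.1 ho
      simp at this
  | some p =>
      cases fanPt_inj (ho : fanPt (k, m) = fanPt p)
      exact ⟨some (k, m), hot, rfl⟩

/-- The indicator function of an isolated point of the fan, as a continuous map. -/
def ind (p : ℕ × ℕ) : C(Fan, Bool) :=
  ⟨fun x => decide (x = fanPt p), by
    apply IsLocallyConstant.continuous
    intro s
    by_cases ht : true ∈ s <;> by_cases hf : false ∈ s
    · have he : (fun x : Fan => decide (x = fanPt p)) ⁻¹' s = Set.univ := by
        ext x; simp only [Set.mem_preimage, Set.mem_univ, iff_true]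
        cases h : decide (x = fanPt p) <;> simp_all
      rw [he]; exact isOpen_univ
    · have he : (fun x : Fan => decide (x = fanPt p)) ⁻¹' s = {fanPt p} := by
        ext x
        simp only [Set.mem_preimage, Set.mem_singleton_iff]
        constructor
        · intro hx
          by_contra hne
          rw [decide_eq_false hne] at hx; exact hf hx
        · intro hx; rw [decide_eq_true hx]; exact ht
      rw [he]; exact isOpen_some p
    · have he : (fun x : Fan => decide (x = fanPt p)) ⁻¹' s = {x : Fan | x ≠ fanPt p} := by
        ext x
        simp only [Set.mem_preimage, Set.mem_setOf_eq]
        constructor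
        · intro hx hne
          rw [decide_eq_true hne] at hx; exact ht hx
        · intro hx; rw [decide_eq_false hx]; exact hf
      rw [he]; exact isOpen_ne_some p
    · have he : (fun x : Fan => decide (x = fanPt p)) ⁻¹' s = ∅ := by
        ext x; simp only [Set.mem_preimage, Set.mem_empty_iff_false, iff_false]
        intro hx
        cases h : decide (x = fanPt p) <;> rw [h] at hx
        · exact hf hx
        · exact ht hx
      rw [he]; exact isOpen_empty⟩

lemma ind_apply (p : ℕ × ℕ) (y : Fan) : ind p y = decide (y = fanPt p) := rfl

/-- The constant-false map. -/
def zf : C(Fan, Bool) := ContinuousMap.const Fan false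

/-- The building blocks of our sequentially closed, non-closed set. -/
def fanA (k n i : ℕ) : C(Fan, Bool) :=
  if i ≤ k then ind (k, n) else if i = k + 1 then ind (n, 0) else zf

/-- The sequentially closed, non-closed subset of `C(Fan, Bool)^ω`. -/
def setA : Set (ℕ → C(Fan, Bool)) := {x | ∃ k n : ℕ, x = fun i => fanA k n i}

/-- Core non-convergence lemma: a sequence of point indicators whose columns
escape to infinity has no limit in `C_k(Fan, Bool)`. -/
lemma core_no_limit (q : ℕ → ℕ × ℕ) (h1 : Tendsto (fun j => (q j).1) atTop atTop)
    (f : ℕ → C(Fan, Bool)) (hf : ∀ j y, f j y = decide (y = fanPt (q j)))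
    (p : C(Fan, Bool)) : ¬ Tendsto f atTop (𝓝 p) := by
  intro hT
  have hpt : ∀ y : Fan, ∀ᶠ j in atTop, f j y = p y := by
    intro y
    have hmaps : Set.MapsTo p {y} {p y} := by
      intro z hz; rw [Set.mem_singleton_iff] at hz; subst hz; rfl
    have := ContinuousMap.tendsto_nhds_compactOpen.mp hT {y} isCompact_singleton {p y}
      (isOpen_discrete _) hmaps
    filter_upwards [this] with j hj
    exact hj rfl
  have hpnone : p fanInf = false := by
    obtain ⟨j, hj⟩ := (hpt fanInf).exists
    rw [← hj, hf]
    exact decide_eq_false (fanInf_ne_pt _)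
  have hps : ∀ m, p (fanPt (q m)) = false := by
    intro m
    have h2 : ∀ᶠ j in atTop, (q m).1 < (q j).1 := h1.eventually_gt_atTop (q m).1
    obtain ⟨j, hj1, hj2⟩ := ((hpt (fanPt (q m))).and h2).exists
    rw [← hj1, hf]
    refine decide_eq_false ?_
    intro h
    rw [fanPt_inj h] at hj2
    omega
  have hqn : Tendsto (fun j => fanPt (q j)) atTop (𝓝 fanInf) := tendsto_fanPt_fanInf q h1
  have hK : IsCompact (insert fanInf (Set.range fun j => fanPt (q j))) :=
    hqn.isCompact_insert_range
  have hmaps : Set.MapsTo p (insert fanInf (Set.range fun j => fanPt (q j))) {false} := by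
    rintro y (rfl | ⟨m, rfl⟩)
    · exact hpnone
    · exact hps m
  have hev := ContinuousMap.tendsto_nhds_compactOpen.mp hT _ hK {false}
    (isOpen_discrete _) hmaps
  obtain ⟨j, hj⟩ := hev.exists
  have hmem : f j (fanPt (q j)) ∈ ({false} : Set Bool) :=
    hj (Set.mem_insert_of_mem _ ⟨j, rfl⟩)
  rw [hf] at hmem
  simp at hmem

lemma aux_tendsto_atTop {g : ℕ → ℕ} (h : ∀ c : ℕ, ∀ᶠ j in atTop, g j ≠ c) :
    Tendsto g atTop atTop := by
  rw [tendsto_atTop]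
  intro b
  have hb : ∀ᶠ j in atTop, ∀ c ∈ Set.Iio b, g j ≠ c :=
    (Filter.eventually_all_finite (Set.finite_Iio b)).2 fun c _ => h c
  filter_upwards [hb] with j hj
  by_contra hcon
  exact hj (g j) (Set.mem_Iio.2 (Nat.lt_of_not_le hcon)) rfl

/-- `setA` is sequentially closed. -/
lemma setA_isSeqClosed : IsSeqClosed setA := by
  intro u p hu hup
  choose k n hkn using hu
  by_cases hfreq : ∃ m, ∃ᶠ j in atTop, k j = m
  · obtain ⟨k₀, hk₀⟩ := hfreq
    obtain ⟨φ, hφmono, hφ⟩ := Filter.extraction_of_frequently_atTop hk₀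
    have hupφ : Tendsto (u ∘ φ) atTop (𝓝 p) := hup.comp hφmono.tendsto_atTop
    by_cases hfreq2 : ∃ c, ∃ᶠ j in atTop, n (φ j) = c
    · obtain ⟨c, hc⟩ := hfreq2
      obtain ⟨ψ, hψmono, hψ⟩ := Filter.extraction_of_frequently_atTop hc
      have h2 : Tendsto (u ∘ φ ∘ ψ) atTop (𝓝 p) := hupφ.comp hψmono.tendsto_atTop
      have h3 : (u ∘ φ ∘ ψ) = fun _ => (fun i => fanA k₀ c i) := by
        funext j
        have hj := hkn (φ (ψ j))
        rw [Function.comp_apply, Function.comp_apply, hj, hφ (ψ j), hψ j]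
      rw [h3] at h2
      have := tendsto_nhds_unique h2 tendsto_const_nhds
      exact ⟨k₀, c, this⟩
    · exfalso
      push_neg at hfreq2
      have hnT : Tendsto (fun j => n (φ j)) atTop atTop :=
        aux_tendsto_atTop fun c => (hfreq2 c)
      refine core_no_limit (fun j => (n (φ j), 0)) hnT
        (fun j => u (φ j) (k₀ + 1)) ?_ (p (k₀ + 1)) ?_
      · intro j y
        show (u (φ j)) (k₀ + 1) y = decide (y = fanPt (n (φ j), 0))
        rw [hkn (φ j), hφ j]
        have h1 : ¬ (k₀ + 1 ≤ k₀) := by omega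
        simp only [fanA, if_neg h1, if_pos rfl]
        rfl
      · exact tendsto_pi_nhds.1 hupφ (k₀ + 1)
  · exfalso
    push_neg at hfreq
    have hkT : Tendsto k atTop atTop :=
      aux_tendsto_atTop fun c => (hfreq c)
    refine core_no_limit (fun j => (k j, n j)) hkT (fun j => u j 0) ?_ (p 0) ?_
    · intro j y
      show (u j) 0 y = decide (y = fanPt (k j, n j))
      rw [hkn j]
      simp only [fanA, if_pos (Nat.zero_le (k j))]
      rfl
    · exact tendsto_pi_nhds.1 hup 0

/-- The filter used to witness that the zero function is in the closure of `setA`. -/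
def closFilter : Filter (ℕ × ℕ) :=
  ⨅ s : ℕ × {K : Set Fan // IsCompact K},
    Filter.principal {kn : ℕ × ℕ | s.1 ≤ kn.1 ∧ fanPt kn ∉ s.2.1}

lemma closFilter_sets_nonempty (s : ℕ × {K : Set Fan // IsCompact K}) :
    {kn : ℕ × ℕ | s.1 ≤ kn.1 ∧ fanPt kn ∉ s.2.1}.Nonempty := by
  obtain ⟨m, hm⟩ := (col_finite s.2.2 s.1).infinite_compl.nonempty
  exact ⟨(s.1, m), le_refl _, hm⟩

lemma closFilter_neBot : (closFilter).NeBot := by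
  apply Filter.iInf_neBot_of_directed
  · rintro ⟨m₁, K₁, hK₁⟩ ⟨m₂, K₂, hK₂⟩
    refine ⟨⟨max m₁ m₂, ⟨K₁ ∪ K₂, hK₁.union hK₂⟩⟩,
      Filter.principal_mono.2 ?_, Filter.principal_mono.2 ?_⟩
    · rintro kn ⟨h1, h2⟩
      exact ⟨le_trans (le_max_left _ _) h1, fun hc => h2 (Or.inl hc)⟩
    · rintro kn ⟨h1, h2⟩
      exact ⟨le_trans (le_max_right _ _) h1, fun hc => h2 (Or.inr hc)⟩
  · intro s
    exact Filter.principal_neBot_iff.2 (closFilter_sets_nonempty s)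

lemma mem_closFilter (m : ℕ) {K : Set Fan} (hK : IsCompact K) :
    {kn : ℕ × ℕ | m ≤ kn.1 ∧ fanPt kn ∉ K} ∈ closFilter :=
  Filter.mem_iInf_of_mem (⟨m, ⟨K, hK⟩⟩ : ℕ × {K : Set Fan // IsCompact K})
    (Filter.mem_principal_self _)

/-- The zero function lies in the closure of `setA`. -/
lemma zero_mem_closure : (fun _ : ℕ => zf) ∈ closure setA := by
  have hten : Tendsto (fun kn : ℕ × ℕ => (fun i => fanA kn.1 kn.2 i))
      closFilter (𝓝 (fun _ : ℕ => zf)) := by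
    rw [tendsto_pi_nhds]
    intro i
    rw [ContinuousMap.tendsto_nhds_compactOpen]
    intro K hK U hU hmaps
    filter_upwards [mem_closFilter (i + 1) hK] with kn hkn
    obtain ⟨h1, h2⟩ := hkn
    intro y hy
    have hle : i ≤ kn.1 := by omega
    have hval : fanA kn.1 kn.2 i y = false := by
      rw [fanA, if_pos hle, ind_apply]
      apply decide_eq_false
      intro hc
      rw [hc] at hy
      exact h2 hy
    rw [hval]
    exact hmaps hy
  haveI := closFilter_neBot
  exact mem_closure_of_tendsto hten
    (Filter.Eventually.of_forall fun kn => ⟨kn.1, kn.2, rfl⟩)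

lemma zero_not_mem : (fun _ : ℕ => zf) ∉ setA := by
  rintro ⟨k, m, hkm⟩
  have h0 := congrFun hkm 0
  have hv := ContinuousMap.congr_fun h0 (fanPt (k, m))
  rw [show fanA k m 0 = ind (k, m) from if_pos (Nat.zero_le k), ind_apply] at hv
  simp [zf] at hv

lemma setA_not_closed : ¬ IsClosed setA := fun h =>
  zero_not_mem (h.closure_subset zero_mem_closure)

lemma slice_compact {K : Set (Σ _ : ℕ, Fan)} (hK : IsCompact K) (i : ℕ) :
    IsCompact (Sigma.mk i ⁻¹' K) :=
  (IsOpenEmbedding.sigmaMk (i := i)).toIsEmbedding.toIsInducing.isCompact_preimage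
    isClosed_range_sigmaMk hK

lemma fst_image_finite {K : Set (Σ _ : ℕ, Fan)} (hK : IsCompact K) :
    (Sigma.fst '' K).Finite := by
  obtain ⟨t, ht⟩ := hK.elim_finite_subcover (fun i : ℕ => Set.range (Sigma.mk i))
    (fun i => isOpen_range_sigmaMk) (fun x _ => Set.mem_iUnion.2 ⟨x.1, ⟨x.2, rfl⟩⟩)
  apply t.finite_toSet.subset
  rintro _ ⟨x, hx, rfl⟩
  have hmem := ht hx
  rw [Set.mem_iUnion₂] at hmem
  obtain ⟨j, hjt, y, hy⟩ := hmem
  have hxj : x.1 = j := by rw [← hy]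
  rwa [hxj]

/-- The homeomorphism `C_k(ω × M, 2) ≃ₜ C_k(M, 2)^ω`. -/
def fanHomeo : C((Σ _ : ℕ, Fan), Bool) ≃ₜ (ℕ → C(Fan, Bool)) where
  toEquiv := (ContinuousMap.sigmaEquiv Bool (fun _ : ℕ => Fan)).symm
  continuous_toFun :=
    continuous_pi fun i => ContinuousMap.continuous_precomp (ContinuousMap.sigmaMk i)
  continuous_invFun := by
    apply ContinuousMap.continuous_compactOpen.2
    intro K hK U hU
    show IsOpen {x : ℕ → C(Fan, Bool) |
      Set.MapsTo (⇑(ContinuousMap.sigmaEquiv Bool (fun _ : ℕ => Fan) x)) K U}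
    have key : {x : ℕ → C(Fan, Bool) |
        Set.MapsTo (⇑(ContinuousMap.sigmaEquiv Bool (fun _ : ℕ => Fan) x)) K U} =
        ⋂ i ∈ Sigma.fst '' K, (fun x : ℕ → C(Fan, Bool) => x i) ⁻¹'
          {g : C(Fan, Bool) | Set.MapsTo g ((@Sigma.mk ℕ (fun _ => Fan) i) ⁻¹' K) U} := by
      ext x
      simp only [Set.mem_setOf_eq, Set.mem_iInter, Set.mem_preimage]
      constructor
      · intro h i _ y hy
        exact h hy
      · intro h z hz
        obtain ⟨i, y⟩ := z
        exact h i ⟨⟨i, y⟩, hz, rfl⟩ hz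
    rw [key]
    exact (fst_image_finite hK).isOpen_biInter fun i _ =>
      (ContinuousMap.isOpen_setOf_mapsTo (slice_compact hK i) hU).preimage (continuous_apply i)

theorem stmt18 :
    Nonempty (C((Σ _ : ℕ, Fan), Bool) ≃ₜ (ℕ → C(Fan, Bool))) ∧
    ¬ SequentialSpace C((Σ _ : ℕ, Fan), Bool) := by
  refine ⟨⟨fanHomeo⟩, ?_⟩
  intro hseq
  haveI : SequentialSpace (ℕ → C(Fan, Bool)) := fanHomeo.isQuotientMap.sequentialSpace
  exact setA_not_closed setA_isSeqClosed.isClosed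
end
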